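/- A symmetric spider with b legs of length 2 (the rooted symmetric tree with daughter degree sequence (b, 1)) is 0-rotatable. -/
import Mathlib

/-- A graceful labelling of a graph `G` on a finite vertex type: `f` is an injection into
`{0, ..., |V| - 1}` and the induced edge labels `|f u - f v|` are pairwise distinct. -/
def IsGraceful {V : Type*} [Fintype V] (G : SimpleGraph V) (f : V → ℕ) : Prop :=
  Function.Injective f ∧ (∀ v, f v < Fintype.card V) ∧
    ∀ u v u' v', G.Adj u v → G.Adj u' v' →
      ((f u : ℤ) - (f v : ℤ)).natAbs = ((f u' : ℤ) - (f v' : ℤ)).natAbs →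
      s(u, v) = s(u', v')


/-- A symmetric spider with `b` legs of length 2: `none` is the centre,
`some (i, false)` is the middle vertex of the `i`-th leg and `some (i, true)` is its
leaf. -/
def spider2 (b : ℕ) : SimpleGraph (Option (Fin b × Bool)) :=
  SimpleGraph.fromRel (fun u v =>
    (u = none ∧ ∃ i, v = some (i, false)) ∨
    (∃ i, u = some (i, false) ∧ v = some (i, true)))

lemma spider2_adj (b : ℕ) (u v : Option (Fin b × Bool)) :
    (spider2 b).Adj u v ↔ ∃ i : Fin b,
      (u = none ∧ v = some (i, false)) ∨ (v = none ∧ u = some (i, false)) ∨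
      (u = some (i, false) ∧ v = some (i, true)) ∨
      (v = some (i, false) ∧ u = some (i, true)) := by
  simp only [spider2, SimpleGraph.fromRel_adj]
  constructor
  · rintro ⟨hne, h⟩; aesop
  · rintro ⟨i, h⟩; aesop

/-- Labelling of a spider given by centre value `c`, middle values `M` and leaf values `L`. -/
def legF (b : ℕ) (c : ℕ) (M L : Fin b → ℕ) : Option (Fin b × Bool) → ℕ
  | none => c
  | some (i, false) => M i
  | some (i, true) => L i

lemma isGraceful_aux (b : ℕ) (c : ℕ) (M L : Fin b → ℕ)
    (hc : c < 2 * b + 1) (hM : ∀ i, M i < 2 * b + 1) (hL : ∀ i, L i < 2 * b + 1)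
    (hMM : ∀ i j, M i = M j → i = j)
    (hLL : ∀ i j, L i = L j → i = j)
    (hML : ∀ i j, M i ≠ L j)
    (hcM : ∀ i, c ≠ M i) (hcL : ∀ i, c ≠ L i)
    (eMM : ∀ i j, ((c : ℤ) - M i).natAbs = ((c : ℤ) - M j).natAbs → i = j)
    (eLL : ∀ i j, ((M i : ℤ) - L i).natAbs = ((M j : ℤ) - L j).natAbs → i = j)
    (eML : ∀ i j, ((c : ℤ) - M i).natAbs ≠ ((M j : ℤ) - L j).natAbs) :
    IsGraceful (spider2 b) (legF b c M L) := by
  have hcard : Fintype.card (Option (Fin b × Bool)) = 2 * b + 1 := by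
    simp [mul_comm]
  refine ⟨?_, ?_, ?_⟩
  · rintro (_ | ⟨i, _ | _⟩) (_ | ⟨j, _ | _⟩) h <;>
      simp only [legF] at h <;>
      first
        | rfl
        | (exact absurd h (hcM _))
        | (exact absurd h (hcL _))
        | (exact absurd h.symm (hcM _))
        | (exact absurd h.symm (hcL _))
        | (exact absurd h (hML _ _))
        | (exact absurd h.symm (hML _ _))
        | (exact congrArg (fun i => some (i, false)) (hMM _ _ h))
        | (exact congrArg (fun i => some (i, true)) (hLL _ _ h))
  · rintro (_ | ⟨i, _ | _⟩) <;> simp only [legF, hcard] <;> first | exact hc | exact hM i | exact hL i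
  · have nac : ∀ x y : ℤ, (x - y).natAbs = (y - x).natAbs := fun x y => by omega
    have key : ∀ u v, (spider2 b).Adj u v → ∃ i : Fin b, ∃ t : Bool,
        s(u, v) = (if t then s(some (i, false), some (i, true)) else s(none, some (i, false))) ∧
        ((legF b c M L u : ℤ) - legF b c M L v).natAbs =
          (if t then ((M i : ℤ) - L i).natAbs else ((c : ℤ) - M i).natAbs) := by
      intro u v h
      rw [spider2_adj] at h
      obtain ⟨i, h⟩ := h
      rcases h with ⟨rfl, rfl⟩ | ⟨rfl, rfl⟩ | ⟨rfl, rfl⟩ | ⟨rfl, rfl⟩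
      · exact ⟨i, false, rfl, rfl⟩
      · exact ⟨i, false, Sym2.eq_swap, by simp only [legF, if_neg Bool.false_ne_true]; exact nac _ _⟩
      · exact ⟨i, true, rfl, rfl⟩
      · exact ⟨i, true, Sym2.eq_swap, by simp only [legF, if_pos rfl]; exact nac _ _⟩
    intro u v u' v' h h' heq
    obtain ⟨i, t, hs, he⟩ := key u v h
    obtain ⟨j, t', hs', he'⟩ := key u' v' h'
    rw [he, he'] at heq
    rw [hs, hs']
    cases t <;> cases t' <;> simp only [if_true, if_false, Bool.false_eq_true, Bool.true_eq_false] at heq ⊢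
    · rw [eMM i j heq]
    · exact absurd heq (eML i j)
    · exact absurd heq.symm (eML j i)
    · rw [eLL i j heq]

/-- A symmetric spider with `b` legs of length 2 (the rooted symmetric tree with
daughter degree sequence `(b, 1)`) is 0-rotatable. -/
theorem spider2_zeroRotatable (b : ℕ) (hb : 1 ≤ b) :
    ∀ v : Option (Fin b × Bool),
      ∃ f : Option (Fin b × Bool) → ℕ, IsGraceful (spider2 b) f ∧ f v = 0 := by
  rintro (_ | ⟨i₀, _ | _⟩)
  · -- centre: c = 0, M i = 2i+2, L i = 2b-1-2i
    refine ⟨legF b 0 (fun i => 2 * i + 2) (fun i => 2 * b - 1 - 2 * i), ?_, rfl⟩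
    refine isGraceful_aux b 0 _ _ (by omega) (fun i => by have := i.isLt; omega)
      (fun i => by have := i.isLt; omega) ?_ ?_ ?_ ?_ ?_ ?_ ?_ ?_ <;>
      first
        | (intro i j h; exact Fin.ext (by have := i.isLt; have := j.isLt; omega))
        | (intro i j; have := i.isLt; have := j.isLt; omega)
        | (intro i; have := i.isLt; omega)
  · -- middle of leg i₀: c = 2b, M i = 2 σ(i), L i = 2b-1-2 σ(i), σ = swap i₀ 0
    set σ := Equiv.swap i₀ (⟨0, hb⟩ : Fin b) with hσ
    refine ⟨legF b (2 * b) (fun i => 2 * (σ i)) (fun i => 2 * b - 1 - 2 * (σ i)), ?_, ?_⟩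
    · refine isGraceful_aux b (2 * b) _ _ (by omega) (fun i => by have := (σ i).isLt; omega)
        (fun i => by have := (σ i).isLt; omega) ?_ ?_ ?_ ?_ ?_ ?_ ?_ ?_ <;>
        first
          | (intro i j h;
             exact σ.injective (Fin.ext (by have := (σ i).isLt; have := (σ j).isLt; omega)))
          | (intro i j; have := (σ i).isLt; have := (σ j).isLt; omega)
          | (intro i; have := (σ i).isLt; omega)
    · show 2 * (σ i₀ : ℕ) = 0
      rw [hσ, Equiv.swap_apply_left]
      rfl
  · -- leaf of leg i₀: c = 1, σ = swap i₀ (b-1); last leg gets (2b, 0),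
    -- leg with σ-value k < b-1 gets (2k+3, 2b-2-2k)
    set σ := Equiv.swap i₀ (⟨b - 1, by omega⟩ : Fin b) with hσ
    refine ⟨legF b 1
      (fun i => if (σ i : ℕ) = b - 1 then 2 * b else 2 * (σ i) + 3)
      (fun i => if (σ i : ℕ) = b - 1 then 0 else 2 * b - 2 - 2 * (σ i)), ?_, ?_⟩
    · refine isGraceful_aux b 1 _ _ (by omega)
        (fun i => by have := (σ i).isLt; split_ifs <;> omega)
        (fun i => by have := (σ i).isLt; split_ifs <;> omega) ?_ ?_ ?_ ?_ ?_ ?_ ?_ ?_ <;>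
        first
          | (intro i j h; refine σ.injective (Fin.ext ?_);
             have := (σ i).isLt; have := (σ j).isLt; split_ifs at h <;> omega)
          | (intro i j; have := (σ i).isLt; have := (σ j).isLt; split_ifs <;> omega)
          | (intro i; have := (σ i).isLt; split_ifs <;> omega)
    · show (if ((σ i₀ : Fin b) : ℕ) = b - 1 then 0 else 2 * b - 2 - 2 * (σ i₀)) = 0
      rw [hσ, Equiv.swap_apply_left]
      simp
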